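/- Let ℓ be prime, let W be a subspace of F_ℓ^n on which the standard bilinear form is non-degenerate, and let b_1, ..., b_t be distinct {0,1}-vectors in W such that (b_1·b_1)(b_i·b_j) = (b_1·b_i)(b_1·b_j) ≠ 0 for all i, j ∈ [t]. Then dim W ≥ 2⌈log₂(t+1)⌉ − 1. -/

import Mathlib

open Module Submodule

lemma count01 {F : Type*} [Field F] {n t : ℕ} (S : Submodule F (Fin n → F))
    (b : Fin t → Fin n → F) (hinj : Function.Injective b) (hb : ∀ i, b i ∈ S)
    (h01 : ∀ i j, b i j = 0 ∨ b i j = 1) (hne : ∀ i, b i ≠ 0) :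
    t + 1 ≤ 2 ^ finrank F S := by
  classical
  set φ : Fin n → Module.Dual F ↥S := fun j => (LinearMap.proj j).comp S.subtype with hφ
  have hspan : span F (Set.range φ) = ⊤ := by
    have hco : (span F (Set.range φ)).dualCoannihilator = ⊥ := by
      rw [eq_bot_iff]
      intro x hx
      rw [Submodule.mem_dualCoannihilator] at hx
      have : ∀ j, (x : Fin n → F) j = 0 := by
        intro j
        exact hx (φ j) (Submodule.subset_span ⟨j, rfl⟩)
      simp only [Submodule.mem_bot]
      ext j
      exact this j
    have h1 := Subspace.finrank_add_finrank_dualCoannihilator_eq (span F (Set.range φ))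
    rw [hco, finrank_bot, add_zero] at h1
    apply Submodule.eq_top_of_finrank_eq
    rw [h1, Subspace.dual_finrank_eq]
  obtain ⟨s, hs_sub, hs_span, hs_li⟩ := exists_linearIndependent F (Set.range φ)
  rw [hspan] at hs_span
  have hsfin : s.Finite := hs_li.setFinite
  letI := hsfin.fintype
  have hcard : Fintype.card s = finrank F ↥S := by
    have hb' : Basis s F (Module.Dual F ↥S) :=
      Basis.mk hs_li (by rw [Subtype.range_coe, hs_span])
    rw [← Module.finrank_eq_card_basis hb', Subspace.dual_finrank_eq]
  -- values are 0 or 1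
  have hval : ∀ (f : s) (i : Fin t), (f : Module.Dual F ↥S) ⟨b i, hb i⟩ = 0 ∨
      (f : Module.Dual F ↥S) ⟨b i, hb i⟩ = 1 := by
    rintro ⟨f, hf⟩ i
    obtain ⟨j, rfl⟩ := hs_sub hf
    exact h01 i j
  -- if all of s vanishes on x, then x = 0
  have hzero : ∀ x : ↥S, (∀ f : s, (f : Module.Dual F ↥S) x = 0) → x = 0 := by
    intro x hx
    rw [← Module.forall_dual_apply_eq_zero_iff F x]
    intro ψ
    have hψ : ψ ∈ span F s := by rw [hs_span]; exact Submodule.mem_top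
    have hker : span F s ≤ LinearMap.ker ((Module.Dual.eval F ↥S) x) := by
      rw [Submodule.span_le]
      intro f hf
      exact hx ⟨f, hf⟩
    exact hker hψ
  set g : Fin t → (s → Bool) := fun i f => decide ((f : Module.Dual F ↥S) ⟨b i, hb i⟩ = 1) with hg
  have hval' : ∀ (i : Fin t) (f : s), g i f = false → (f : Module.Dual F ↥S) ⟨b i, hb i⟩ = 0 := by
    intro i f hfalse
    rcases hval f i with h | h
    · exact h
    · simp [hg, h] at hfalse
  have hval1 : ∀ (i : Fin t) (f : s), g i f = true → (f : Module.Dual F ↥S) ⟨b i, hb i⟩ = 1 := by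
    intro i f htrue
    simpa [hg] using htrue
  have hginj : Function.Injective g := by
    intro i i' hii
    apply hinj
    have : (⟨b i, hb i⟩ : ↥S) = ⟨b i', hb i'⟩ := by
      have hsub : (⟨b i, hb i⟩ : ↥S) - ⟨b i', hb i'⟩ = 0 := by
        apply hzero
        intro f
        have : (f : Module.Dual F ↥S) ⟨b i, hb i⟩ = (f : Module.Dual F ↥S) ⟨b i', hb i'⟩ := by
          cases hgi : g i f
          · rw [hval' i f hgi, hval' i' f (by rw [← hii]; exact hgi)]
          · rw [hval1 i f hgi, hval1 i' f (by rw [← hii]; exact hgi)]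
        simp [map_sub, this]
      rwa [sub_eq_zero] at hsub
    exact congrArg Subtype.val this
  have hgne : ∀ i, g i ≠ fun _ => false := by
    intro i hcon
    apply hne i
    have : (⟨b i, hb i⟩ : ↥S) = 0 := by
      apply hzero
      intro f
      exact hval' i f (congrFun hcon f)
    exact congrArg Subtype.val this
  -- extend to Option
  let G : Option (Fin t) → (s → Bool) := fun o => o.elim (fun _ => false) g
  have hGinj : Function.Injective G := by
    rintro (_ | i) (_ | i') h
    · rfl
    · exact absurd h.symm (hgne i')
    · exact absurd h (hgne i)
    · exact congrArg some (hginj h)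
  have := Fintype.card_le_of_injective G hGinj
  simpa [hcard, Fintype.card_fun] using this

/-- Lemma on {0,1}-vectors in a non-degenerate subspace of F_ℓ^n. -/
theorem dimension_lemma (ℓ n t : ℕ) [Fact ℓ.Prime] (ht : 0 < t)
    (W : Submodule (ZMod ℓ) (Fin n → ZMod ℓ))
    (hW : ∀ u ∈ W, u ≠ 0 → ∃ v ∈ W, dotProduct u v ≠ 0)
    (b : Fin t → (Fin n → ZMod ℓ))
    (hinj : Function.Injective b)
    (hmem : ∀ i, b i ∈ W)
    (h01 : ∀ i j, b i j = 0 ∨ b i j = 1)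
    (hprod : ∀ i j, dotProduct (b ⟨0, ht⟩) (b ⟨0, ht⟩) * dotProduct (b i) (b j)
        = dotProduct (b ⟨0, ht⟩) (b i) * dotProduct (b ⟨0, ht⟩) (b j)
      ∧ dotProduct (b ⟨0, ht⟩) (b ⟨0, ht⟩) * dotProduct (b i) (b j) ≠ 0) :
    2 * Nat.clog 2 (t + 1) - 1 ≤ Module.finrank (ZMod ℓ) ↥W := by
  classical
  set e : Fin t := ⟨0, ht⟩ with he
  have hd0 : dotProduct (b e) (b e) ≠ 0 :=
    fun h => (hprod e e).2 (by rw [h, zero_mul])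
  have hc0 : ∀ i, dotProduct (b e) (b i) ≠ 0 := by
    intro i h
    exact (hprod e i).2 (by rw [h, mul_zero])
  have hbne : ∀ i, b i ≠ 0 := by
    intro i hbi
    exact hc0 i (by rw [hbi, dotProduct_zero])
  -- the reduced vectors
  set u : Fin t → (Fin n → ZMod ℓ) :=
    fun i => b i - (dotProduct (b e) (b i) * (dotProduct (b e) (b e))⁻¹) • b e
    with hu
  have humem : ∀ i, u i ∈ W := fun i => W.sub_mem (hmem i) (W.smul_mem _ (hmem e))
  have huu : ∀ i j, dotProduct (u i) (u j) = 0 := by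
    intro i j
    rw [hu]
    simp only [sub_dotProduct, dotProduct_sub, smul_dotProduct,
      dotProduct_smul, smul_eq_mul]
    rw [dotProduct_comm (b i) (b e)]
    field_simp
    linear_combination (hprod i j).1
  have hbu : ∀ j, dotProduct (b e) (u j) = 0 := by
    intro j
    rw [hu]
    simp only [dotProduct_sub, dotProduct_smul, smul_eq_mul]
    field_simp
    ring
  -- bilinear form on W
  set B : LinearMap.BilinForm (ZMod ℓ) ↥W := LinearMap.mk₂ (ZMod ℓ)
    (fun x y : ↥W => dotProduct (x : Fin n → ZMod ℓ) (y : Fin n → ZMod ℓ))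
    (by intro x y z; simp [add_dotProduct])
    (by intro a x y; simp [smul_dotProduct])
    (by intro x y z; simp [dotProduct_add])
    (by intro a x y; simp [dotProduct_smul]) with hB
  have hBapp : ∀ x y : ↥W, B x y
      = dotProduct (x : Fin n → ZMod ℓ) (y : Fin n → ZMod ℓ) := fun x y => rfl
  have hBrefl : B.IsRefl := by
    intro x y h
    rw [hBapp] at h ⊢
    rw [dotProduct_comm]; exact h
  have hBnd : B.Nondegenerate := by
    refine (LinearMap.IsRefl.nondegenerate_iff_separatingLeft hBrefl).mpr ?_
    intro m hm
    by_contra hm0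
    have hm1 : (m : Fin n → ZMod ℓ) ≠ 0 := fun h => hm0 (Subtype.ext h)
    obtain ⟨v, hv, hv0⟩ := hW m m.2 hm1
    exact hv0 (hm ⟨v, hv⟩)
  -- submodules inside W
  set e0 : ↥W := ⟨b e, hmem e⟩ with he0
  set uv : Fin t → ↥W := fun i => ⟨u i, humem i⟩ with huv
  set U : Submodule (ZMod ℓ) ↥W := span (ZMod ℓ) (Set.range uv) with hU
  set T : Submodule (ZMod ℓ) ↥W := span (ZMod ℓ) (insert e0 (Set.range uv)) with hT
  have hUorth : U ≤ B.orthogonal T := by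
    rw [hU, Submodule.span_le]
    rintro _ ⟨j, rfl⟩
    show uv j ∈ B.orthogonal T
    rw [LinearMap.BilinForm.mem_orthogonal_iff]
    intro m hm
    have hker : T ≤ LinearMap.ker (B.flip (uv j)) := by
      rw [hT, Submodule.span_le]
      rintro _ (rfl | ⟨i, rfl⟩)
      · simpa [LinearMap.mem_ker, hBapp, he0, huv] using hbu j
      · simpa [LinearMap.mem_ker, hBapp, huv] using huu _ j
    exact hker hm
  have hfin : finrank (ZMod ℓ) ↥U + finrank (ZMod ℓ) ↥T ≤ finrank (ZMod ℓ) ↥W := by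
    have h1 := LinearMap.BilinForm.finrank_orthogonal hBnd T
    have h2 : finrank (ZMod ℓ) ↥U ≤ finrank (ZMod ℓ) ↥(B.orthogonal T) :=
      Submodule.finrank_mono hUorth
    have h3 : finrank (ZMod ℓ) ↥T ≤ finrank (ZMod ℓ) ↥W := Submodule.finrank_le T
    omega
  -- span of b maps into T
  set S : Submodule (ZMod ℓ) (Fin n → ZMod ℓ) := span (ZMod ℓ) (Set.range b) with hS
  have hST : S ≤ T.map W.subtype := by
    rw [hS, Submodule.span_le]
    rintro _ ⟨i, rfl⟩
    refine ⟨⟨b i, hmem i⟩, ?_, rfl⟩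
    have hdec : (⟨b i, hmem i⟩ : ↥W) = uv i
        + (dotProduct (b e) (b i) * (dotProduct (b e) (b e))⁻¹) • e0 := by
      apply Subtype.ext
      simp [huv, hu, he0]
    rw [hdec]
    exact T.add_mem (Submodule.subset_span (Or.inr ⟨i, rfl⟩))
      (T.smul_mem _ (Submodule.subset_span (Or.inl rfl)))
  have hkT : finrank (ZMod ℓ) ↥S ≤ finrank (ZMod ℓ) ↥T := by
    calc finrank (ZMod ℓ) ↥S ≤ finrank (ZMod ℓ) ↥(T.map W.subtype) :=
          Submodule.finrank_mono hST
    _ = finrank (ZMod ℓ) ↥T := Submodule.finrank_map_subtype_eq W T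
  have hTU : finrank (ZMod ℓ) ↥T ≤ finrank (ZMod ℓ) ↥U + 1 := by
    have hsup : T = (span (ZMod ℓ) {e0}) ⊔ U := by
      rw [hT, hU, Submodule.span_insert]
    have h1 : finrank (ZMod ℓ) ↥(span (ZMod ℓ) ({e0} : Set ↥W)) ≤ 1 := by
      simpa using finrank_span_le_card ({e0} : Set ↥W)
    have h2 := Submodule.finrank_sup_add_finrank_inf_eq (span (ZMod ℓ) ({e0} : Set ↥W)) U
    rw [hsup]; omega
  -- counting
  have hcount : t + 1 ≤ 2 ^ finrank (ZMod ℓ) ↥S :=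
    count01 S b hinj (fun i => Submodule.subset_span ⟨i, rfl⟩) h01 hbne
  have hclog : Nat.clog 2 (t + 1) ≤ finrank (ZMod ℓ) ↥S :=
    (Nat.clog_le_iff_le_pow (by norm_num)).mpr hcount
  omega
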